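/- arXiv:1812.06483 — 7 statements merged into one kernel-verified Lean document; each statement's English description precedes it below -/
import Mathlib

section
/- Let 𝒜 be a unital C*-algebra and (V, V⁺, e) an AOU 𝒜-space. Then the family (C_n^{min}(V;𝒜))_{n∈ℕ} is an operator 𝒜-system structure on V; that is: each C_n^{min}(V;𝒜) is a cone contained in M_n(V)_h with C_n^{min}(V;𝒜) ∩ (−C_n^{min}(V;𝒜)) = {0}, C_1^{min}(V;𝒜) = V⁺, the family is 𝒜-compatible (A*·X·A ∈ C_n^{min}(V;𝒜) whenever X ∈ C_m^{min}(V;𝒜) and A ∈ M_{m,n}(𝒜)), and for every n the element e_n is an Archimedean order unit for C_n^{min}(V;𝒜). -/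
open Matrix

noncomputable section

/-- An AOU `𝒜`-space: an Archimedean order unit *-vector space `(V, pos, e)` which is an
`A`-bimodule (actions `l`, `r`) satisfying `(a·x)* = x*·a*`, `a·e = e·a` and
`a*·x·a ∈ V⁺` for `x ∈ V⁺`. -/
structure AOUPack (A V : Type*) [Ring A] [StarRing A] [Algebra ℂ A]
    [AddCommGroup V] [Module ℂ V] [StarAddMonoid V] [StarModule ℂ V] where
  /-- the left action `a · x` -/
  l : A → V → V
  /-- the right action `x · a` -/
  r : V → A → V
  /-- the cone `V⁺` of positive elements -/
  pos : Set V
  /-- the Archimedean order unit -/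
  e : V
  l_add : ∀ a b x, l (a + b) x = l a x + l b x
  add_l : ∀ a x y, l a (x + y) = l a x + l a y
  smul_l : ∀ (c : ℂ) a x, l (c • a) x = c • l a x
  l_smul : ∀ (c : ℂ) a x, l a (c • x) = c • l a x
  r_add : ∀ x y a, r (x + y) a = r x a + r y a
  add_r : ∀ x a b, r x (a + b) = r x a + r x b
  smul_r : ∀ (c : ℂ) x a, r (c • x) a = c • r x a
  r_smul : ∀ (c : ℂ) x a, r x (c • a) = c • r x a
  mul_l : ∀ a b x, l (a * b) x = l a (l b x)
  mul_r : ∀ x a b, r x (a * b) = r (r x a) b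
  l_r_assoc : ∀ a x b, r (l a x) b = l a (r x b)
  one_l : ∀ x, l 1 x = x
  star_l : ∀ a x, star (l a x) = r (star x) (star a)
  pos_isSelfAdjoint : ∀ x ∈ pos, star x = x
  pos_add_mem : ∀ x ∈ pos, ∀ y ∈ pos, x + y ∈ pos
  pos_smul_mem : ∀ (t : ℝ), 0 ≤ t → ∀ x ∈ pos, (t : ℂ) • x ∈ pos
  pos_nonempty : pos.Nonempty
  pos_salient : ∀ x ∈ pos, -x ∈ pos → x = 0
  e_isSelfAdjoint : star e = e
  e_orderUnit : ∀ x, star x = x → ∃ t : ℝ, 0 < t ∧ (t : ℂ) • e - x ∈ pos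
  e_arch : ∀ x, (∀ t : ℝ, 0 < t → x + (t : ℂ) • e ∈ pos) → x ∈ pos
  e_comm : ∀ a, l a e = r e a
  conj_mem : ∀ a, ∀ x ∈ pos, r (l (star a) x) a ∈ pos

namespace AOUPack

variable {A V : Type*} [Ring A] [StarRing A] [Algebra ℂ A]
  [AddCommGroup V] [Module ℂ V] [StarAddMonoid V] [StarModule ℂ V]

variable (P : AOUPack A V)

/-- The action of a matrix over `A` on a matrix over `V` from the left:
`(M · X)_{ij} = Σ_p M_{ip} · X_{pj}`. -/
def amul {k m n : ℕ} (M : Matrix (Fin k) (Fin m) A) (X : Matrix (Fin m) (Fin n) V) :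
    Matrix (Fin k) (Fin n) V :=
  Matrix.of fun i j => ∑ p, P.l (M i p) (X p j)

/-- The action of a matrix over `A` on a matrix over `V` from the right:
`(X · N)_{ij} = Σ_p X_{ip} · N_{pj}`. -/
def vmul {m n l : ℕ} (X : Matrix (Fin m) (Fin n) V) (N : Matrix (Fin n) (Fin l) A) :
    Matrix (Fin m) (Fin l) V :=
  Matrix.of fun i j => ∑ p, P.r (X i p) (N p j)

/-- The congruence `M* · X · M` of `X ∈ M_m(V)` by `M ∈ M_{m,n}(A)`. -/
def conj {m n : ℕ} (M : Matrix (Fin m) (Fin n) A) (X : Matrix (Fin m) (Fin m) V) :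
    Matrix (Fin n) (Fin n) V :=
  P.vmul (P.amul Mᴴ X) M

/-- The diagonal matrix `e_n ∈ M_n(V)` with all diagonal entries equal to `e`. -/
def matE (n : ℕ) : Matrix (Fin n) (Fin n) V := Matrix.diagonal fun _ => P.e

/-- `C_n^{min}(V; A)`: hermitian `X ∈ M_n(V)` with `C* · X · C ∈ V⁺` for every
column `C ∈ M_{n,1}(A)`. -/
def Cmin (n : ℕ) : Set (Matrix (Fin n) (Fin n) V) :=
  {X | Xᴴ = X ∧ ∀ C : Matrix (Fin n) (Fin 1) A, P.conj C X 0 0 ∈ P.pos}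

/-- `D_n^{max}(V; A)`: finite sums `Σ_i A_i* · x_i · A_i` with `x_i ∈ V⁺` and
`A_i ∈ M_{1,n}(A)`. -/
def Dmax (n : ℕ) : Set (Matrix (Fin n) (Fin n) V) :=
  {X | ∃ (k : ℕ) (x : Fin k → V) (a : Fin k → Matrix (Fin 1) (Fin n) A),
    (∀ i, x i ∈ P.pos) ∧ X = ∑ i, P.conj (a i) (Matrix.of fun _ _ => x i)}

/-- `C_n^{max}(V; A) = {X : X + r e_n ∈ D_n^{max}(V; A) for all r > 0}`. -/
def Cmax (n : ℕ) : Set (Matrix (Fin n) (Fin n) V) :=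
  {X | ∀ t : ℝ, 0 < t → X + (t : ℂ) • P.matE n ∈ P.Dmax n}

/-- `Q` is an operator `A`-system structure on `V`: an `A`-compatible matrix ordering
with `Q 1 = V⁺` such that `e_n` is an Archimedean order unit for `Q n` for every `n`. -/
structure IsOperatorSystemStructure (Q : ∀ n : ℕ, Set (Matrix (Fin n) (Fin n) V)) : Prop where
  herm : ∀ n, ∀ X ∈ Q n, Xᴴ = X
  add_mem : ∀ n, ∀ X ∈ Q n, ∀ Y ∈ Q n, X + Y ∈ Q n
  smul_mem : ∀ n (t : ℝ), 0 ≤ t → ∀ X ∈ Q n, (t : ℂ) • X ∈ Q n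
  nonempty : ∀ n, (Q n).Nonempty
  salient : ∀ n, ∀ X ∈ Q n, -X ∈ Q n → X = 0
  compat : ∀ m n (X : Matrix (Fin m) (Fin m) V) (M : Matrix (Fin m) (Fin n) A),
    X ∈ Q m → P.conj M X ∈ Q n
  level_one : ∀ X : Matrix (Fin 1) (Fin 1) V, X ∈ Q 1 ↔ X 0 0 ∈ P.pos
  orderUnit : ∀ n (X : Matrix (Fin n) (Fin n) V), Xᴴ = X →
    ∃ t : ℝ, 0 < t ∧ (t : ℂ) • P.matE n - X ∈ Q n
  arch : ∀ n (X : Matrix (Fin n) (Fin n) V),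
    (∀ t : ℝ, 0 < t → X + (t : ℂ) • P.matE n ∈ Q n) → X ∈ Q n

end AOUPack
namespace AOUPack

variable {A V : Type*} [Ring A] [StarRing A] [Algebra ℂ A]
  [AddCommGroup V] [Module ℂ V] [StarAddMonoid V] [StarModule ℂ V]

variable (P : AOUPack A V)

lemma l_zero (a : A) : P.l a 0 = 0 := by
  simpa using P.l_smul 0 a 0

lemma zero_l (x : V) : P.l 0 x = 0 := by
  simpa using P.smul_l 0 0 x

lemma r_zero (a : A) : P.r 0 a = 0 := by
  simpa using P.smul_r 0 0 a

lemma zero_r (x : V) : P.r x 0 = 0 := by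
  simpa using P.r_smul 0 x 0

lemma r_one (x : V) : P.r x 1 = x := by
  have h := P.star_l 1 (star x)
  rw [P.one_l, star_star, star_one] at h
  exact h.symm

lemma star_r (y : V) (b : A) : star (P.r y b) = P.l (star b) (star y) := by
  have h := P.star_l (star b) (star y)
  rw [star_star, star_star] at h
  rw [← h, star_star]

/-- The sesquilinear expression `a* · v · b`. -/
def B (a b : A) (v : V) : V := P.r (P.l (star a) v) b

lemma B_mem_pos (a : A) {v : V} (hv : v ∈ P.pos) : P.B a a v ∈ P.pos :=
  P.conj_mem a v hv

lemma B_add_left (a a' b : A) (v : V) :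
    P.B (a + a') b v = P.B a b v + P.B a' b v := by
  unfold B; rw [star_add, P.l_add, P.r_add]

lemma B_add_right (a b b' : A) (v : V) :
    P.B a (b + b') v = P.B a b v + P.B a b' v := by
  unfold B; rw [P.add_r]

lemma B_add_v (a b : A) (v w : V) :
    P.B a b (v + w) = P.B a b v + P.B a b w := by
  unfold B; rw [P.add_l, P.r_add]

lemma B_smul_left [StarModule ℂ A] (c : ℂ) (a b : A) (v : V) :
    P.B (c • a) b v = (starRingEnd ℂ c) • P.B a b v := by
  unfold B; rw [star_smul, P.smul_l, P.smul_r]; rfl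

lemma B_smul_right (c : ℂ) (a b : A) (v : V) :
    P.B a (c • b) v = c • P.B a b v := by
  unfold B; rw [P.r_smul]

lemma B_smul_v (c : ℂ) (a b : A) (v : V) :
    P.B a b (c • v) = c • P.B a b v := by
  unfold B; rw [P.l_smul, P.smul_r]

lemma B_zero_left (b : A) (v : V) : P.B 0 b v = 0 := by
  unfold B; rw [star_zero, P.zero_l, P.r_zero]

lemma B_zero_right (a : A) (v : V) : P.B a 0 v = 0 := by
  unfold B; rw [P.zero_r]

lemma B_zero_v (a b : A) : P.B a b (0 : V) = 0 := by
  unfold B; rw [P.l_zero, P.r_zero]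

lemma B_neg_left (a b : A) (v : V) : P.B (-a) b v = -P.B a b v := by
  unfold B; rw [star_neg, ← neg_one_smul ℂ (star a), P.smul_l, P.smul_r]; simp

lemma B_neg_right (a b : A) (v : V) : P.B a (-b) v = -P.B a b v := by
  rw [← neg_one_smul ℂ b, P.B_smul_right]; simp

lemma B_neg_v (a b : A) (v : V) : P.B a b (-v) = -P.B a b v := by
  rw [← neg_one_smul ℂ v, P.B_smul_v]; simp

lemma B_one_one (v : V) : P.B 1 1 v = v := by
  unfold B; rw [star_one, P.one_l, P.r_one]

lemma star_B (a b : A) (v : V) : star (P.B a b v) = P.B b a (star v) := by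
  unfold B
  rw [P.star_r, P.star_l, star_star, P.l_r_assoc]

lemma B_comp (a b c d : A) (v : V) :
    P.B a b (P.B c d v) = P.B (c * a) (d * b) v := by
  unfold B
  rw [StarMul.star_mul, P.mul_l, P.mul_r, ← P.l_r_assoc]

lemma B_sum_v {ι : Type*} (s : Finset ι) (f : ι → V) (a b : A) :
    P.B a b (∑ i ∈ s, f i) = ∑ i ∈ s, P.B a b (f i) := by
  classical
  induction s using Finset.induction_on with
  | empty => simp [B_zero_v]
  | insert _ _ h ih => rw [Finset.sum_insert h, Finset.sum_insert h, P.B_add_v, ih]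

lemma B_sum_left {ι : Type*} (s : Finset ι) (f : ι → A) (b : A) (v : V) :
    P.B (∑ i ∈ s, f i) b v = ∑ i ∈ s, P.B (f i) b v := by
  classical
  induction s using Finset.induction_on with
  | empty => simp [B_zero_left]
  | insert _ _ h ih => rw [Finset.sum_insert h, Finset.sum_insert h, P.B_add_left, ih]

lemma B_sum_right {ι : Type*} (s : Finset ι) (f : ι → A) (a : A) (v : V) :
    P.B a (∑ i ∈ s, f i) v = ∑ i ∈ s, P.B a (f i) v := by
  classical
  induction s using Finset.induction_on with
  | empty => simp [B_zero_right]
  | insert _ _ h ih => rw [Finset.sum_insert h, Finset.sum_insert h, P.B_add_right, ih]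

lemma r_sum {ι : Type*} (s : Finset ι) (f : ι → V) (a : A) :
    P.r (∑ i ∈ s, f i) a = ∑ i ∈ s, P.r (f i) a := by
  classical
  induction s using Finset.induction_on with
  | empty => simp [r_zero]
  | insert _ _ h ih => rw [Finset.sum_insert h, Finset.sum_insert h, P.r_add, ih]


lemma conj_apply {m n : ℕ} (M : Matrix (Fin m) (Fin n) A)
    (X : Matrix (Fin m) (Fin m) V) (i j : Fin n) :
    P.conj M X i j = ∑ p, ∑ q, P.B (M p i) (M q j) (X p q) := by
  unfold conj vmul amul B
  simp only [Matrix.of_apply, Matrix.conjTranspose_apply, P.r_sum]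
  exact Finset.sum_comm

lemma conj_add {m n : ℕ} (M : Matrix (Fin m) (Fin n) A)
    (X Y : Matrix (Fin m) (Fin m) V) :
    P.conj M (X + Y) = P.conj M X + P.conj M Y := by
  ext i j
  simp only [Matrix.add_apply, P.conj_apply]
  rw [← Finset.sum_add_distrib]
  refine Finset.sum_congr rfl fun p _ => ?_
  rw [← Finset.sum_add_distrib]
  exact Finset.sum_congr rfl fun q _ => P.B_add_v _ _ _ _

lemma conj_smul {m n : ℕ} (c : ℂ) (M : Matrix (Fin m) (Fin n) A)
    (X : Matrix (Fin m) (Fin m) V) :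
    P.conj M (c • X) = c • P.conj M X := by
  ext i j
  simp only [Matrix.smul_apply, P.conj_apply, Finset.smul_sum]
  exact Finset.sum_congr rfl fun p _ => Finset.sum_congr rfl fun q _ =>
    P.B_smul_v _ _ _ _

lemma conj_neg {m n : ℕ} (M : Matrix (Fin m) (Fin n) A)
    (X : Matrix (Fin m) (Fin m) V) :
    P.conj M (-X) = -P.conj M X := by
  have h := P.conj_smul (-1) M X
  simpa using h

lemma conj_zero {m n : ℕ} (M : Matrix (Fin m) (Fin n) A) :
    P.conj M (0 : Matrix (Fin m) (Fin m) V) = 0 := by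
  have h := P.conj_smul 0 M 0
  simpa using h

lemma conj_sub {m n : ℕ} (M : Matrix (Fin m) (Fin n) A)
    (X Y : Matrix (Fin m) (Fin m) V) :
    P.conj M (X - Y) = P.conj M X - P.conj M Y := by
  rw [sub_eq_add_neg, P.conj_add, P.conj_neg, sub_eq_add_neg]

lemma conj_herm {m n : ℕ} (M : Matrix (Fin m) (Fin n) A)
    {X : Matrix (Fin m) (Fin m) V} (hX : Xᴴ = X) :
    (P.conj M X)ᴴ = P.conj M X := by
  have hX' : ∀ p q, star (X p q) = X q p := by
    intro p q
    have := congrFun (congrFun hX q) p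
    simpa [Matrix.conjTranspose_apply] using this
  ext i j
  simp only [Matrix.conjTranspose_apply, P.conj_apply]
  rw [star_sum]
  rw [Finset.sum_comm]
  refine Finset.sum_congr rfl fun p _ => ?_
  rw [star_sum]
  refine Finset.sum_congr rfl fun q _ => ?_
  rw [P.star_B, hX']

lemma sum_swap4 {n₁ n₂ n₃ n₄ : ℕ} (f : Fin n₁ → Fin n₂ → Fin n₃ → Fin n₄ → V) :
    ∑ p, ∑ q, ∑ u, ∑ v, f p q u v = ∑ u, ∑ v, ∑ p, ∑ q, f p q u v := by
  calc ∑ p, ∑ q, ∑ u, ∑ v, f p q u v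
      = ∑ p, ∑ u, ∑ q, ∑ v, f p q u v :=
        Finset.sum_congr rfl fun p _ => Finset.sum_comm
    _ = ∑ u, ∑ p, ∑ q, ∑ v, f p q u v := Finset.sum_comm
    _ = ∑ u, ∑ p, ∑ v, ∑ q, f p q u v :=
        Finset.sum_congr rfl fun u _ => Finset.sum_congr rfl fun p _ =>
          Finset.sum_comm
    _ = ∑ u, ∑ v, ∑ p, ∑ q, f p q u v :=
        Finset.sum_congr rfl fun u _ => Finset.sum_comm

lemma conj_conj {m n k : ℕ} (M : Matrix (Fin m) (Fin n) A)
    (N : Matrix (Fin n) (Fin k) A) (X : Matrix (Fin m) (Fin m) V) :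
    P.conj N (P.conj M X) = P.conj (M * N) X := by
  ext i j
  simp only [P.conj_apply, Matrix.mul_apply, P.B_sum_v, P.B_comp,
    P.B_sum_left, P.B_sum_right]
  exact sum_swap4 _

lemma matE_herm (n : ℕ) : (P.matE n : Matrix (Fin n) (Fin n) V)ᴴ = P.matE n := by
  ext i j
  unfold matE
  by_cases h : i = j
  · subst h; simp [Matrix.conjTranspose_apply, P.e_isSelfAdjoint]
  · rw [Matrix.conjTranspose_apply, Matrix.diagonal_apply_ne _ (fun hh => h hh.symm),
      Matrix.diagonal_apply_ne _ h, star_zero]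

lemma conj_matE_col {n : ℕ} (C : Matrix (Fin n) (Fin 1) A) :
    P.conj C (P.matE n) 0 0 = ∑ p, P.B (C p 0) (C p 0) P.e := by
  rw [P.conj_apply]
  refine Finset.sum_congr rfl fun p _ => ?_
  unfold matE
  rw [Finset.sum_eq_single p]
  · simp
  · intro q _ hq
    simp [Matrix.diagonal_apply, Ne.symm hq, P.B_zero_v]
  · intro h; exact absurd (Finset.mem_univ p) h


lemma pos_zero_mem : (0 : V) ∈ P.pos := by
  obtain ⟨x, hx⟩ := P.pos_nonempty
  simpa using P.pos_smul_mem 0 le_rfl x hx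

lemma pos_sum_mem {ι : Type*} (s : Finset ι) (f : ι → V)
    (hf : ∀ i ∈ s, f i ∈ P.pos) : (∑ i ∈ s, f i) ∈ P.pos :=
  Finset.sum_induction f (· ∈ P.pos) (fun a b ha hb => P.pos_add_mem a ha b hb)
    P.pos_zero_mem hf

lemma e_mem : P.e ∈ P.pos := by
  obtain ⟨t, ht, hmem⟩ := P.e_orderUnit (-P.e) (by rw [star_neg, P.e_isSelfAdjoint])
  rw [sub_neg_eq_add] at hmem
  have h2 : ((t : ℂ) • P.e + P.e) = (((t + 1 : ℝ)) : ℂ) • P.e := by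
    push_cast; rw [add_smul, one_smul]
  rw [h2] at hmem
  have h3 := P.pos_smul_mem (t + 1)⁻¹ (by positivity) _ hmem
  rwa [smul_smul, ← Complex.ofReal_mul, inv_mul_cancel₀ (by positivity),
    Complex.ofReal_one, one_smul] at h3

lemma smul_e_sub_mem_mono {s t : ℝ} (hst : s ≤ t) {w : V}
    (h : (s : ℂ) • P.e - w ∈ P.pos) : (t : ℂ) • P.e - w ∈ P.pos := by
  have h2 := P.pos_add_mem _ h _ (P.pos_smul_mem (t - s) (by linarith) _ P.e_mem)
  have h3 : (s : ℂ) • P.e - w + ((t - s : ℝ) : ℂ) • P.e = (t : ℂ) • P.e - w := by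
    push_cast; rw [sub_smul]; abel
  rwa [h3] at h2

lemma orderUnit₂ {w : V} (hw : star w = w) :
    ∃ t : ℝ, 0 < t ∧ (t : ℂ) • P.e - w ∈ P.pos ∧ (t : ℂ) • P.e + w ∈ P.pos := by
  obtain ⟨t₁, ht₁, h₁⟩ := P.e_orderUnit w hw
  obtain ⟨t₂, ht₂, h₂⟩ := P.e_orderUnit (-w) (by rw [star_neg, hw])
  refine ⟨max t₁ t₂, lt_max_of_lt_left ht₁,
    P.smul_e_sub_mem_mono (le_max_left _ _) h₁, ?_⟩
  have h3 := P.smul_e_sub_mem_mono (s := t₂) (t := max t₁ t₂) (le_max_right _ _) h₂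
  rwa [sub_neg_eq_add] at h3

lemma exists_bound {ι : Type*} [Fintype ι] (w : ι → V) (hw : ∀ i, star (w i) = w i) :
    ∃ t : ℝ, 0 < t ∧ ∀ i, ((t : ℂ) • P.e - w i ∈ P.pos ∧ (t : ℂ) • P.e + w i ∈ P.pos) := by
  have H := fun i => P.orderUnit₂ (hw i)
  choose t ht hneg hposi using H
  have hsum : (0:ℝ) ≤ ∑ i, t i := Finset.sum_nonneg fun i _ => (ht i).le
  refine ⟨1 + ∑ i, t i, by linarith, fun i => ?_⟩
  have hle : t i ≤ 1 + ∑ j, t j := by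
    have h4 : t i ≤ ∑ j, t j :=
      Finset.single_le_sum (fun j _ => (ht j).le) (Finset.mem_univ i)
    linarith
  refine ⟨P.smul_e_sub_mem_mono hle (hneg i), ?_⟩
  have h2 := P.smul_e_sub_mem_mono (w := -w i) hle (by rw [sub_neg_eq_add]; exact hposi i)
  rwa [sub_neg_eq_add] at h2

lemma pos_arch' {x y : V} (hy : y ∈ P.pos)
    (h : ∀ t : ℝ, 0 < t → x + (t : ℂ) • y ∈ P.pos) : x ∈ P.pos := by
  obtain ⟨s, hs, hse⟩ := P.e_orderUnit y (P.pos_isSelfAdjoint y hy)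
  refine P.e_arch x fun t ht => ?_
  have h1 := h (t / s) (by positivity)
  have h2 := P.pos_smul_mem (t / s) (by positivity) _ hse
  have h3 := P.pos_add_mem _ h1 _ h2
  have h4 : x + ((t / s : ℝ) : ℂ) • y + ((t / s : ℝ) : ℂ) • ((s : ℂ) • P.e - y)
      = x + (t : ℂ) • P.e := by
    rw [smul_sub, smul_smul, ← Complex.ofReal_mul, div_mul_cancel₀ _ (ne_of_gt hs)]
    abel
  rwa [h4] at h3

lemma L1 {t : ℝ} {w : V} (hw1 : (t : ℂ) • P.e - w ∈ P.pos)
    (hw2 : (t : ℂ) • P.e + w ∈ P.pos) (a b : A) :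
    (t : ℂ) • (P.B a a P.e + P.B b b P.e) - (P.B a b w + P.B b a w) ∈ P.pos := by
  have h1 : P.B (a + b) (a + b) ((t : ℂ) • P.e - w) ∈ P.pos := P.B_mem_pos _ hw1
  have h2 : P.B (a - b) (a - b) ((t : ℂ) • P.e + w) ∈ P.pos := P.B_mem_pos _ hw2
  have h3 := P.pos_smul_mem (1/2) (by norm_num) _ (P.pos_add_mem _ h1 _ h2)
  have key : ((1/2 : ℝ) : ℂ) • (P.B (a + b) (a + b) ((t : ℂ) • P.e - w) +
      P.B (a - b) (a - b) ((t : ℂ) • P.e + w)) =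
      (t : ℂ) • (P.B a a P.e + P.B b b P.e) - (P.B a b w + P.B b a w) := by
    simp only [sub_eq_add_neg, P.B_add_left, P.B_add_right, P.B_add_v,
      P.B_neg_left, P.B_neg_right, P.B_neg_v, P.B_smul_v]
    push_cast
    module
  rwa [key] at h3


lemma pairing [StarModule ℂ A] {t : ℝ} {x y : V} (a b : A)
    (hh1 : (t : ℂ) • P.e - (1/2 : ℂ) • (x + y) ∈ P.pos)
    (hh2 : (t : ℂ) • P.e + (1/2 : ℂ) • (x + y) ∈ P.pos)
    (hk1 : (t : ℂ) • P.e - (Complex.I/2) • (y - x) ∈ P.pos)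
    (hk2 : (t : ℂ) • P.e + (Complex.I/2) • (y - x) ∈ P.pos) :
    ((2*t : ℝ) : ℂ) • (P.B a a P.e + P.B b b P.e) - (P.B a b x + P.B b a y) ∈ P.pos := by
  have i1 := P.L1 hh1 hh2 a b
  have i2 := P.L1 hk1 hk2 ((-Complex.I) • a) b
  have hI : Complex.I * (Complex.I / 2) = -(1/2 : ℂ) := by
    rw [div_eq_mul_inv, ← mul_assoc, Complex.I_mul_I]; ring
  have hI' : -Complex.I * (Complex.I / 2) = (1/2 : ℂ) := by
    rw [neg_mul, hI, neg_neg]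
  have h3 := P.pos_add_mem _ i1 _ i2
  convert h3 using 1
  simp only [P.B_smul_left, P.B_smul_right, map_neg, Complex.conj_I, neg_neg,
    P.B_add_v, P.B_smul_v, sub_eq_add_neg, P.B_neg_v, smul_smul, hI, hI',
    mul_neg, neg_mul, Complex.I_mul_I]
  push_cast
  module


lemma sum_two {M : Type*} [AddCommMonoid M] {n : ℕ} {i j : Fin n} (hij : i ≠ j)
    (f : Fin n → M) (hf : ∀ p, p ≠ i → p ≠ j → f p = 0) : ∑ p, f p = f i + f j := by
  classical
  rw [← Finset.sum_subset (Finset.subset_univ ({i, j} : Finset (Fin n)))]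
  · rw [Finset.sum_pair hij]
  · intro p _ hp
    simp only [Finset.mem_insert, Finset.mem_singleton] at hp
    push_neg at hp
    exact hf p hp.1 hp.2

lemma sum_one {M : Type*} [AddCommMonoid M] {n : ℕ} {i : Fin n}
    (f : Fin n → M) (hf : ∀ p, p ≠ i → f p = 0) : ∑ p, f p = f i :=
  Finset.sum_eq_single_of_mem i (Finset.mem_univ i) fun p _ hp => hf p hp

lemma conj_col_single {n : ℕ} (i : Fin n) (x : A) (X : Matrix (Fin n) (Fin n) V) :
    P.conj (Matrix.of fun p (_ : Fin 1) => if p = i then x else 0) X 0 0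
      = P.B x x (X i i) := by
  rw [P.conj_apply]
  simp only [Matrix.of_apply]
  rw [sum_one (i := i) _ (fun p h1 => by
    rw [if_neg h1]
    simp [P.B_zero_left])]
  rw [sum_one (i := i) _ (fun q h1 => by
    rw [if_neg h1, P.B_zero_right])]
  rw [if_pos rfl]

lemma conj_col_pair {n : ℕ} {i j : Fin n} (hij : i ≠ j) (x y : A)
    (X : Matrix (Fin n) (Fin n) V) :
    P.conj (Matrix.of fun p (_ : Fin 1) => if p = i then x else if p = j then y else 0) X 0 0
      = (P.B x x (X i i) + P.B x y (X i j)) + (P.B y x (X j i) + P.B y y (X j j)) := by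
  rw [P.conj_apply]
  simp only [Matrix.of_apply]
  have haz : ∀ p : Fin n, p ≠ i → p ≠ j →
      (if p = i then x else if p = j then y else 0) = 0 := by
    intro p h1 h2; rw [if_neg h1, if_neg h2]
  rw [sum_two hij _ (fun p h1 h2 => by
    rw [haz p h1 h2]
    simp [P.B_zero_left])]
  rw [sum_two hij _ (fun q h1 h2 => by rw [haz q h1 h2, P.B_zero_right])]
  rw [sum_two hij _ (fun q h1 h2 => by rw [haz q h1 h2, P.B_zero_right])]
  rw [if_pos rfl, if_neg (Ne.symm hij), if_pos rfl]

end AOUPack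

/-- Theorem 3.2 (first part): `(C_n^{min}(V;𝒜))_{n∈ℕ}` is an operator `𝒜`-system
structure on `V`. -/
theorem cmin_isOperatorSystemStructure
    {A V : Type*} [CStarAlgebra A]
    [AddCommGroup V] [Module ℂ V] [StarAddMonoid V] [StarModule ℂ V]
    (P : AOUPack A V) :
    P.IsOperatorSystemStructure (fun n => P.Cmin n) := by
  classical
  constructor
  -- herm
  · intro n X hX; exact hX.1
  -- add_mem
  · intro n X hX Y hY
    refine ⟨by rw [Matrix.conjTranspose_add, hX.1, hY.1], fun C => ?_⟩
    rw [P.conj_add, Matrix.add_apply]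
    exact P.pos_add_mem _ (hX.2 C) _ (hY.2 C)
  -- smul_mem
  · intro n t ht X hX
    refine ⟨?_, fun C => ?_⟩
    · rw [Matrix.conjTranspose_smul, hX.1, Complex.star_def, Complex.conj_ofReal]
    · rw [P.conj_smul, Matrix.smul_apply]
      exact P.pos_smul_mem t ht _ (hX.2 C)
  -- nonempty
  · intro n
    exact ⟨0, by rw [Matrix.conjTranspose_zero],
      fun C => by rw [P.conj_zero, Matrix.zero_apply]; exact P.pos_zero_mem⟩
  -- salient
  · intro n X hX hnX
    have hzero : ∀ C : Matrix (Fin n) (Fin 1) A, P.conj C X 0 0 = 0 := by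
      intro C
      refine P.pos_salient _ (hX.2 C) ?_
      have h := hnX.2 C
      rwa [P.conj_neg, Matrix.neg_apply] at h
    have hdiag : ∀ i, X i i = 0 := by
      intro i
      have h1 := hzero (Matrix.of fun p (_ : Fin 1) => if p = i then (1 : A) else 0)
      rwa [P.conj_col_single, P.B_one_one] at h1
    ext i j
    rw [Matrix.zero_apply]
    by_cases hij : i = j
    · subst hij; exact hdiag i
    · have h1 := hzero (Matrix.of fun p (_ : Fin 1) =>
        if p = i then (1 : A) else if p = j then (1 : A) else 0)
      rw [P.conj_col_pair hij, P.B_one_one, P.B_one_one, P.B_one_one, P.B_one_one,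
        hdiag i, hdiag j] at h1
      have h2 := hzero (Matrix.of fun p (_ : Fin 1) =>
        if p = i then (1 : A) else if p = j then (Complex.I • 1 : A) else 0)
      rw [P.conj_col_pair hij] at h2
      simp only [P.B_smul_left, P.B_smul_right, Complex.conj_I, smul_smul,
        P.B_one_one, neg_mul, Complex.I_mul_I, neg_neg, one_smul,
        hdiag i, hdiag j, smul_zero] at h2
      -- h1 : 0 + X i j + (X j i + 0) = 0 ; h2 : 0 + I • X i j + (-I • X j i + 0) = 0
      have h3 : X i j + X j i = 0 := by
        have := h1; rw [zero_add, add_zero] at this; exact this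
      have h4 : Complex.I • X i j + (-Complex.I) • X j i = 0 := by
        have := h2; rw [zero_add, add_zero] at this; exact this
      have h5 : X i j - X j i = 0 := by
        have h6 := congrArg (fun v => Complex.I⁻¹ • v) h4
        simp only [smul_add, smul_neg, smul_smul, inv_mul_cancel₀ Complex.I_ne_zero,
          one_smul, smul_zero, mul_neg, neg_smul] at h6
        rw [sub_eq_add_neg]
        exact h6
      have h7 : (2 : ℂ) • X i j = 0 := by
        have := congrArg₂ (· + ·) h3 h5
        simp only [add_zero] at this
        rw [two_smul]
        calc X i j + X i j = X i j + X j i + (X i j - X j i) := by abel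
        _ = 0 := this
      have h8 := congrArg (fun v => (2 : ℂ)⁻¹ • v) h7
      simpa [smul_smul] using h8
  -- compat
  · intro m n X M hX
    refine ⟨P.conj_herm M hX.1, fun C => ?_⟩
    rw [P.conj_conj]
    exact hX.2 (M * C)
  -- level_one
  · intro X
    constructor
    · intro hX
      have h := hX.2 (1 : Matrix (Fin 1) (Fin 1) A)
      rw [P.conj_apply] at h
      simpa [P.B_one_one, Matrix.one_apply] using h
    · intro hX
      refine ⟨?_, fun C => ?_⟩
      · ext i j
        fin_cases i; fin_cases j
        simpa [Matrix.conjTranspose_apply] using P.pos_isSelfAdjoint _ hX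
      · rw [P.conj_apply]
        simp only [Fin.sum_univ_one]
        exact P.B_mem_pos _ hX
  -- orderUnit
  · intro n X hX
    have hX' : ∀ p q, star (X p q) = X q p := by
      intro p q
      have h := congrFun (congrFun hX q) p
      simpa [Matrix.conjTranspose_apply] using h
    set w : (Fin n × Fin n) × Bool → V := fun z =>
      if z.2 then (Complex.I/2) • (X z.1.2 z.1.1 - X z.1.1 z.1.2)
      else (1/2 : ℂ) • (X z.1.1 z.1.2 + X z.1.2 z.1.1) with hw_def
    have hw : ∀ z, star (w z) = w z := by
      rintro ⟨⟨p, q⟩, b⟩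
      cases b
      · simp only [hw_def, Bool.false_eq_true, if_false, star_smul, star_add, hX',
          Complex.star_def, map_div₀, _root_.map_one, map_ofNat]
        rw [add_comm]
      · simp only [hw_def, if_true, star_smul, star_sub, hX', Complex.star_def,
          map_div₀, Complex.conj_I, map_ofNat]
        module
    obtain ⟨t, ht, hbd⟩ := P.exists_bound w hw
    have hn1 : (0 : ℝ) < 2*(n+1)*t := by positivity
    refine ⟨2*(n+1)*t, hn1, ?_, fun C => ?_⟩
    · rw [Matrix.conjTranspose_sub, Matrix.conjTranspose_smul, P.matE_herm, hX,
        Complex.star_def, Complex.conj_ofReal]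
    · rw [P.conj_sub, Matrix.sub_apply, P.conj_smul, Matrix.smul_apply,
        P.conj_matE_col, P.conj_apply]
      set a : Fin n → A := fun p => C p 0 with ha_def
      set E : V := ∑ p, P.B (a p) (a p) P.e with hE
      set W : V := ∑ p, ∑ q, P.B (a p) (a q) (X p q) with hW
      have hG : ∀ p q : Fin n,
          ((2*t : ℝ) : ℂ) • (P.B (a p) (a p) P.e + P.B (a q) (a q) P.e)
            - (P.B (a p) (a q) (X p q) + P.B (a q) (a p) (X q p)) ∈ P.pos := by
        intro p q
        have hb1 := (hbd ((p, q), false)).1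
        have hb2 := (hbd ((p, q), false)).2
        have hb3 := (hbd ((p, q), true)).1
        have hb4 := (hbd ((p, q), true)).2
        simp only [hw_def, Bool.false_eq_true, if_false, if_true] at hb1 hb2 hb3 hb4
        exact P.pairing (a p) (a q) hb1 hb2 hb3 hb4
      have hsum := P.pos_sum_mem Finset.univ _
        (fun p (_ : p ∈ Finset.univ) => P.pos_sum_mem Finset.univ _
          (fun q (_ : q ∈ Finset.univ) => hG p q))
      have hEpos : E ∈ P.pos :=
        P.pos_sum_mem _ _ fun p _ => P.B_mem_pos _ P.e_mem
      have hswap : ∑ p, ∑ q, P.B (a q) (a p) (X q p) = W := Finset.sum_comm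
      have hSig : (∑ p, ∑ q, (((2*t : ℝ) : ℂ) • (P.B (a p) (a p) P.e + P.B (a q) (a q) P.e)
            - (P.B (a p) (a q) (X p q) + P.B (a q) (a p) (X q p))))
          = ((4*n*t : ℝ) : ℂ) • E - (2 : ℂ) • W := by
        simp only [Finset.sum_sub_distrib, Finset.sum_add_distrib, ← Finset.smul_sum,
          Finset.sum_const, Finset.card_univ, Fintype.card_fin, hswap, ← hE, ← hW]
        rw [← Nat.cast_smul_eq_nsmul ℂ n E]
        push_cast
        module
      rw [hSig] at hsum
      have hhalf := P.pos_smul_mem (1/2) (by norm_num) _ hsum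
      have h2tE := P.pos_smul_mem (2*t) (by positivity) _ hEpos
      have hfinal := P.pos_add_mem _ hhalf _ h2tE
      have hkey : ((1/2 : ℝ) : ℂ) • (((4*n*t : ℝ) : ℂ) • E - (2 : ℂ) • W)
          + ((2*t : ℝ) : ℂ) • E = ((2*(n+1)*t : ℝ) : ℂ) • E - W := by
        push_cast
        module
      rwa [hkey] at hfinal
  -- arch
  · intro n X h
    have hherm : Xᴴ = X := by
      have h1 := (h 1 one_pos).1
      rw [Matrix.conjTranspose_add, Matrix.conjTranspose_smul, P.matE_herm,
        Complex.star_def, Complex.conj_ofReal] at h1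
      exact add_right_cancel h1
    refine ⟨hherm, fun C => ?_⟩
    refine P.pos_arch' (y := P.conj C (P.matE n) 0 0) ?_ ?_
    · rw [P.conj_matE_col]
      exact P.pos_sum_mem _ _ fun p _ => P.B_mem_pos _ P.e_mem
    · intro t ht
      have h2 := (h t ht).2 C
      rwa [P.conj_add, Matrix.add_apply, P.conj_smul, Matrix.smul_apply] at h2
end
end

section
/- Let 𝒜 be a unital C*-algebra and (V, V⁺, e) an AOU 𝒜-space. If (P_n)_{n∈ℕ} is any operator 𝒜-system structure on V, then P_n ⊆ C_n^{min}(V;𝒜) for every n ∈ ℕ. -/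
open Matrix

noncomputable section

/-- Theorem 3.2 (second part): any operator `𝒜`-system structure on `V` is contained
in the minimal one. -/
theorem opSysStructure_subset_cmin
    {A V : Type*} [CStarAlgebra A]
    [AddCommGroup V] [Module ℂ V] [StarAddMonoid V] [StarModule ℂ V]
    (P : AOUPack A V) (Q : ∀ n : ℕ, Set (Matrix (Fin n) (Fin n) V))
    (hQ : P.IsOperatorSystemStructure Q) :
    ∀ n : ℕ, Q n ⊆ P.Cmin n := by
  intro n X hX
  exact ⟨hQ.herm n X hX, fun C => (hQ.level_one _).mp (hQ.compat n 1 X C hX)⟩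
end
end

section
/- Let 𝒜 be a unital C*-algebra, (V, V⁺, e) an AOU 𝒜-space, S an operator 𝒜-system, and φ: S → V a positive 𝒜-bimodule map. Then φ is completely positive as a map into the minimal structure: φ^{(n)}(M_n(S)⁺) ⊆ C_n^{min}(V;𝒜) for every n ∈ ℕ. -/
open Matrix

noncomputable section

/-- Theorem 3.3 (i): a positive `𝒜`-bimodule map from an operator `𝒜`-system `S`
into `V` is completely positive into `omin_𝒜(V)`. -/
theorem positive_bimodule_map_into_cmin_completelyPositive
    {A S V : Type*} [CStarAlgebra A]
    [AddCommGroup S] [Module ℂ S] [StarAddMonoid S] [StarModule ℂ S]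
    [AddCommGroup V] [Module ℂ V] [StarAddMonoid V] [StarModule ℂ V]
    (PS : AOUPack A S) (QS : ∀ n : ℕ, Set (Matrix (Fin n) (Fin n) S))
    (hQS : PS.IsOperatorSystemStructure QS)
    (P : AOUPack A V)
    (φ : S →ₗ[ℂ] V)
    (hl : ∀ (a : A) (x : S), φ (PS.l a x) = P.l a (φ x))
    (hr : ∀ (x : S) (a : A), φ (PS.r x a) = P.r (φ x) a)
    (hpos : ∀ x ∈ PS.pos, φ x ∈ P.pos) :
    ∀ n : ℕ, ∀ X ∈ QS n, X.map φ ∈ P.Cmin n := by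
  -- e of S is positive
  have he_pos : PS.e ∈ PS.pos := by
    obtain ⟨t, ht, hp⟩ := PS.e_orderUnit (-PS.e) (by simp [PS.e_isSelfAdjoint])
    have h1 : (t:ℂ) • PS.e - -PS.e = ((t+1:ℝ):ℂ) • PS.e := by push_cast; module
    rw [h1] at hp
    have h2 := PS.pos_smul_mem (1/(t+1)) (by positivity) _ hp
    rw [smul_smul] at h2
    have h3r : (1/(t+1)) * (t+1) = (1:ℝ) := by
      field_simp
    have h3 : ((1/(t+1):ℝ):ℂ) * ((t+1:ℝ):ℂ) = 1 := by exact_mod_cast h3r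
    rwa [h3, one_smul] at h2
  -- φ preserves star on hermitian elements
  have hstarh : ∀ x, star x = x → star (φ x) = φ x := by
    intro x hx
    obtain ⟨t, ht, hp⟩ := PS.e_orderUnit x hx
    have h1 := P.pos_isSelfAdjoint _ (hpos _ hp)
    have he := P.pos_isSelfAdjoint _ (hpos _ he_pos)
    have hx' : φ x = (t:ℂ) • φ PS.e - φ ((t:ℂ) • PS.e - x) := by
      rw [map_sub, LinearMap.map_smul]; abel
    rw [hx', star_sub, star_smul, h1, he]
    simp
  -- φ commutes with star
  have hstar : ∀ x : S, star (φ x) = φ (star x) := by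
    intro x
    have key : ∀ h k : S, star h = h → star k = k →
        star (φ (h + Complex.I • k)) = φ (star (h + Complex.I • k)) := by
      intro h k h1 h2
      rw [star_add, star_smul, h1, h2, map_add, LinearMap.map_smul, map_add,
        LinearMap.map_smul, star_add, star_smul, hstarh _ h1, hstarh _ h2]
    have hhh : star ((1/2 : ℂ) • (x + star x)) = (1/2 : ℂ) • (x + star x) := by
      rw [star_smul, star_add, star_star,
        show star (1/2 : ℂ) = 1/2 by norm_num [Complex.ext_iff], add_comm]
    have hkk : star ((Complex.I/2 : ℂ) • (star x - x)) = (Complex.I/2 : ℂ) • (star x - x) := by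
      rw [star_smul, star_sub, star_star,
        show star (Complex.I/2 : ℂ) = -(Complex.I/2) by norm_num [Complex.ext_iff]]
      module
    have hxd : x = (1/2 : ℂ) • (x + star x)
        + Complex.I • ((Complex.I/2 : ℂ) • (star x - x)) := by
      rw [smul_smul, show Complex.I * (Complex.I/2) = -(1/2 : ℂ) by
        rw [mul_div_assoc', Complex.I_mul_I]; norm_num]
      module
    rw [hxd]
    exact key _ _ hhh hkk
  -- conjugation commutes with the entrywise map
  intro n X hX
  have hφconj : ∀ C : Matrix (Fin n) (Fin 1) A,
      P.conj C (X.map φ) 0 0 = φ (PS.conj C X 0 0) := by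
    intro C
    simp only [AOUPack.conj, AOUPack.vmul, AOUPack.amul, Matrix.of_apply,
      Matrix.map_apply, map_sum]
    refine Finset.sum_congr rfl fun p _ => ?_
    rw [hr]
    congr 1
    rw [map_sum]
    refine Finset.sum_congr rfl fun q _ => ?_
    exact (hl _ _).symm
  refine ⟨?_, ?_⟩
  · have hh := hQS.herm n X hX
    ext i j
    have hX' : X i j = star (X j i) := by
      conv_lhs => rw [← hh]
      simp [Matrix.conjTranspose_apply]
    simp only [Matrix.conjTranspose_apply, Matrix.map_apply]
    rw [hstar, ← hX']
  · intro C
    rw [hφconj]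
    exact hpos _ ((hQS.level_one _).mp (hQS.compat n 1 X C hX))
end
end

section
/- Let 𝒜 be a unital C*-algebra and (V, V⁺, e) an AOU 𝒜-space. If (P_n)_{n∈ℕ} is any operator 𝒜-system structure on V, then C_n^{max}(V;𝒜) ⊆ P_n for every n ∈ ℕ. -/
open Matrix

noncomputable section

/-- Theorem 3.8 (second part): the maximal operator `𝒜`-system structure is contained
in any operator `𝒜`-system structure on `V`. -/
theorem cmax_subset_opSysStructure
    {A V : Type*} [CStarAlgebra A]
    [AddCommGroup V] [Module ℂ V] [StarAddMonoid V] [StarModule ℂ V]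
    (P : AOUPack A V) (Q : ∀ n : ℕ, Set (Matrix (Fin n) (Fin n) V))
    (hQ : P.IsOperatorSystemStructure Q) :
    ∀ n : ℕ, P.Cmax n ⊆ Q n := by
  intro n X hX
  have hzero : (0 : Matrix (Fin n) (Fin n) V) ∈ Q n := by
    obtain ⟨Y, hY⟩ := hQ.nonempty n
    have := hQ.smul_mem n 0 le_rfl Y hY
    simpa using this
  have hD : P.Dmax n ⊆ Q n := by
    rintro Y ⟨k, x, a, hx, rfl⟩
    have hterm : ∀ i : Fin k,
        P.conj (a i) (Matrix.of fun _ _ => x i) ∈ Q n := by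
      intro i
      apply hQ.compat
      rw [hQ.level_one]
      exact hx i
    classical
    refine Finset.sum_induction _ (· ∈ Q n) (fun u w hu hw => hQ.add_mem n u hu w hw) hzero
      (fun i _ => hterm i)
  apply hQ.arch
  intro t ht
  exact hD (hX t ht)
end
end

section
/- Let 𝒜 be a unital C*-algebra, (V, V⁺, e) an AOU 𝒜-space, S an operator 𝒜-system, and φ: V → S a positive 𝒜-bimodule map. Then φ is completely positive as a map from the maximal structure: φ^{(n)}(C_n^{max}(V;𝒜)) ⊆ M_n(S)⁺ for every n ∈ ℕ. -/
open Matrix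

noncomputable section

/-- Theorem 3.9 (i): a positive `𝒜`-bimodule map from `V` into an operator `𝒜`-system
`S` is completely positive as a map from `omax_𝒜(V)`. -/
theorem positive_bimodule_map_from_cmax_completelyPositive
    {A V S : Type*} [CStarAlgebra A]
    [AddCommGroup V] [Module ℂ V] [StarAddMonoid V] [StarModule ℂ V]
    [AddCommGroup S] [Module ℂ S] [StarAddMonoid S] [StarModule ℂ S]
    (P : AOUPack A V)
    (PS : AOUPack A S) (QS : ∀ n : ℕ, Set (Matrix (Fin n) (Fin n) S))
    (hQS : PS.IsOperatorSystemStructure QS)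
    (φ : V →ₗ[ℂ] S)
    (hl : ∀ (a : A) (x : V), φ (P.l a x) = PS.l a (φ x))
    (hr : ∀ (x : V) (a : A), φ (P.r x a) = PS.r (φ x) a)
    (hpos : ∀ x ∈ P.pos, φ x ∈ PS.pos) :
    ∀ n : ℕ, ∀ X ∈ P.Cmax n, X.map φ ∈ QS n := by
  classical
  -- zero lemmas for the actions
  have lzero : ∀ x : S, PS.l 0 x = 0 := fun x => by simpa using PS.smul_l 0 0 x
  have rone : ∀ x : S, PS.r x 1 = x := fun x => by
    simpa [PS.one_l] using (PS.star_l 1 (star x)).symm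
  have rzero' : ∀ a : A, PS.r 0 a = 0 := fun a => by simpa using PS.smul_r 0 0 a
  have rzero : ∀ x : S, PS.r x 0 = 0 := fun x => by simpa using PS.r_smul 0 x 0
  -- 0 ∈ QS m
  have hzeroQ : ∀ m, (0 : Matrix (Fin m) (Fin m) S) ∈ QS m := by
    intro m
    obtain ⟨Y, hY⟩ := hQS.nonempty m
    have := hQS.smul_mem m 0 le_rfl Y hY
    simpa using this
  intro n X hX
  -- φ intertwines conjugation
  have hφconj : ∀ (M : Matrix (Fin 1) (Fin n) A) (Z : Matrix (Fin 1) (Fin 1) V),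
      (P.conj M Z).map φ = PS.conj M (Z.map φ) := by
    intro M Z
    ext i j
    simp [AOUPack.conj, AOUPack.vmul, AOUPack.amul, Matrix.map_apply, map_sum, hr, hl]
  -- images of Dmax elements lie in QS n
  have hDmax : ∀ Y ∈ P.Dmax n, Y.map φ ∈ QS n := by
    rintro Y ⟨k, x, a, hx, rfl⟩
    have hmap : ((∑ i, P.conj (a i) (Matrix.of fun _ _ => x i)).map φ)
        = ∑ i, ((P.conj (a i) (Matrix.of fun _ _ => x i)).map φ) := by
      ext i j
      simp [Matrix.map_apply, Matrix.sum_apply, map_sum]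
    rw [hmap]
    simp only [hφconj]
    refine Finset.sum_induction _ (· ∈ QS n) (fun u v hu hv => hQS.add_mem n u hu v hv)
      (hzeroQ n) ?_
    intro i _
    refine hQS.compat 1 n _ (a i) ?_
    rw [hQS.level_one]
    simpa [Matrix.map_apply] using hpos (x i) (hx i)
  -- e ∈ P.pos, hence φ e ∈ PS.pos
  have hePos : P.e ∈ P.pos := by
    obtain ⟨t, ht, hte⟩ := P.e_orderUnit (-P.e) (by simp [P.e_isSelfAdjoint])
    have h1 : ((t : ℂ)) • P.e - -P.e = ((t + 1 : ℝ) : ℂ) • P.e := by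
      push_cast
      module
    rw [h1] at hte
    have := P.pos_smul_mem (1 / (t + 1)) (by positivity) _ hte
    have heq : ((1 / (t + 1) : ℝ) : ℂ) • (((t + 1 : ℝ) : ℂ) • P.e) = P.e := by
      rw [smul_smul, ← Complex.ofReal_mul]
      rw [one_div, inv_mul_cancel₀ (by positivity)]
      simp
    rwa [heq] at this
  have hφe : φ P.e ∈ PS.pos := hpos _ hePos
  -- diagonal matrices with positive entries are in QS n
  have hdiag : ∀ y ∈ PS.pos, (Matrix.diagonal fun _ : Fin n => y) ∈ QS n := by
    intro y hy
    set rowM : Fin n → Matrix (Fin 1) (Fin n) A :=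
      fun j => Matrix.of fun _ p => if p = j then (1 : A) else 0 with hrowM
    have hentry : ∀ j i k, (PS.conj (rowM j) (Matrix.of fun _ _ => y)) i k
        = if i = j ∧ k = j then y else 0 := by
      intro j i k
      simp only [AOUPack.conj, AOUPack.vmul, AOUPack.amul, Matrix.of_apply,
        Matrix.conjTranspose_apply, hrowM, Fin.sum_univ_one]
      by_cases hij : i = j <;> by_cases hkj : k = j <;>
        simp [hij, hkj, PS.one_l, lzero, rzero, rone, rzero']
    have hsum : (Matrix.diagonal fun _ : Fin n => y)
        = ∑ j, PS.conj (rowM j) (Matrix.of fun _ _ => y) := by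
      ext i k
      rw [Matrix.sum_apply]
      simp only [hentry]
      by_cases hik : i = k
      · subst hik
        simp [Matrix.diagonal_apply]
      · simp only [Matrix.diagonal_apply, if_neg hik]
        refine Eq.symm (Finset.sum_eq_zero ?_)
        intro j _
        rcases eq_or_ne i j with rfl | hij
        · exact if_neg (by rintro ⟨-, rfl⟩; exact hik rfl)
        · simp [hij]
    rw [hsum]
    refine Finset.sum_induction _ (· ∈ QS n) (fun u v hu hv => hQS.add_mem n u hu v hv)
      (hzeroQ n) ?_
    intro j _
    refine hQS.compat 1 n _ (rowM j) ?_
    rw [hQS.level_one]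
    simpa using hy
  -- order unit bound for φ e
  obtain ⟨c, hc, hce⟩ := PS.e_orderUnit (φ P.e) (PS.pos_isSelfAdjoint _ hφe)
  set Eφ : Matrix (Fin n) (Fin n) S := Matrix.diagonal fun _ => φ P.e with hEφ
  have hdiagce : (c : ℂ) • PS.matE n - Eφ ∈ QS n := by
    have heq : (c : ℂ) • PS.matE n - Eφ
        = Matrix.diagonal fun _ : Fin n => ((c : ℂ) • PS.e - φ P.e) := by
      ext i j
      by_cases hij : i = j <;>
        simp [AOUPack.matE, hEφ, Matrix.diagonal_apply, hij]
    rw [heq]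
    exact hdiag _ hce
  -- the map of X + t e_n
  have hmapE : ∀ t : ℝ, (X + (t : ℂ) • P.matE n).map φ = X.map φ + (t : ℂ) • Eφ := by
    intro t
    ext i j
    by_cases hij : i = j <;>
      simp [AOUPack.matE, hEφ, Matrix.diagonal_apply, hij, Matrix.map_apply, map_add, _root_.map_smul]
  -- Archimedean closure
  apply hQS.arch
  intro s hs
  have ht : 0 < s / c := div_pos hs hc
  have h1 : X.map φ + ((s / c : ℝ) : ℂ) • Eφ ∈ QS n := by
    rw [← hmapE]
    exact hDmax _ (hX (s / c) ht)
  have h2 : ((s / c : ℝ) : ℂ) • ((c : ℂ) • PS.matE n - Eφ) ∈ QS n :=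
    hQS.smul_mem n _ ht.le _ hdiagce
  have heq : X.map φ + (s : ℂ) • PS.matE n
      = (X.map φ + ((s / c : ℝ) : ℂ) • Eφ) + ((s / c : ℝ) : ℂ) • ((c : ℂ) • PS.matE n - Eφ) := by
    have hsc : ((s / c : ℝ) : ℂ) * (c : ℂ) = (s : ℂ) := by
      rw [← Complex.ofReal_mul, div_mul_cancel₀ _ hc.ne']
    rw [smul_sub, smul_smul, hsc]
    abel
  rw [heq]
  exact hQS.add_mem n _ h1 _ h2
end
end

section
/- Let k, n be positive integers and let X = (X_{ij})_{i,j=1}^n ∈ M_{nk}(ℂ) be positive semidefinite, with blocks X_{ij} ∈ M_k(ℂ). Then there exist m ∈ ℕ and diagonal matrices D_i^{(r)} ∈ D_k (1 ≤ i ≤ n, 1 ≤ r ≤ m) such that X_{ij} = Σ_{r=1}^m D_i^{(r)} J (D_j^{(r)})* for all i, j, where J ∈ M_k(ℂ) is the matrix all of whose entries equal 1. (This shows every positive block matrix lies in D_n^{max}(M_k; D_k), whence M_k = omax_{D_k}(M_k).) -/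
open Matrix
open scoped ComplexOrder

/-- Proposition 3.10 (half of `M_k = omax_{D_k}(M_k)`): every positive semidefinite
`nk × nk` matrix `X`, viewed as an `n × n` block matrix with `k × k` blocks, can be
written blockwise as `X_{ij} = Σ_r D_i^{(r)} J (D_j^{(r)})*` with `D_i^{(r)}` diagonal
and `J` the all-ones matrix. -/
theorem posSemidef_block_eq_sum_diag_J_diag
    (k n : ℕ)
    (X : Matrix (Fin n × Fin k) (Fin n × Fin k) ℂ) (hX : X.PosSemidef) :
    ∃ (m : ℕ) (D : Fin m → Fin n → Matrix (Fin k) (Fin k) ℂ),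
      (∀ r i, (D r i).IsDiag) ∧
      ∀ i j, (Matrix.of fun a b : Fin k => X (i, a) (j, b)) =
        ∑ r, D r i * (Matrix.of fun _ _ : Fin k => (1 : ℂ)) * (D r j)ᴴ := by
  obtain ⟨B, hB⟩ : ∃ B : Matrix (Fin n × Fin k) (Fin n × Fin k) ℂ, X = Bᴴ * B := by
    open scoped MatrixOrder Matrix.Norms.L2Operator in
    exact CStarAlgebra.nonneg_iff_eq_star_mul_self.mp hX.nonneg
  refine ⟨n * k, fun r i => Matrix.diagonal fun a => star (B (finProdFinEquiv.symm r) (i, a)),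
    fun r i => Matrix.isDiag_diagonal _, fun i j => ?_⟩
  ext a b
  have : ∀ r : Fin (n * k),
      ((Matrix.diagonal fun a => star (B (finProdFinEquiv.symm r) (i, a))) *
        (Matrix.of fun _ _ : Fin k => (1 : ℂ)) *
        (Matrix.diagonal fun a => star (B (finProdFinEquiv.symm r) (j, a)))ᴴ) a b =
      star (B (finProdFinEquiv.symm r) (i, a)) * B (finProdFinEquiv.symm r) (j, b) := by
    intro r
    rw [Matrix.diagonal_conjTranspose, Matrix.mul_assoc, Matrix.diagonal_mul,
      Matrix.mul_diagonal]
    simp [mul_comm]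
  rw [Matrix.sum_apply]
  simp only [this]
  rw [Equiv.sum_comp finProdFinEquiv.symm
    (fun s => star (B s (i, a)) * B s (j, b))]
  simp [hB, Matrix.mul_apply]
end

section
/- Let 𝒜 be a unital C*-algebra, H a complex Hilbert space, π: 𝒜 → B(H) a unital *-homomorphism, and (ξ_i)_{i∈ℕ} a sequence in H with Σ_{i=1}^∞ ‖ξ_i‖² = 1; define ω: 𝒜 → ℂ by ω(c) = Σ_{i=1}^∞ ⟨π(c)ξ_i, ξ_i⟩. Then for every m ∈ ℕ, every matrix T = (T_{pq})_{p,q=1}^m ∈ M_m(B(H)) with ‖T‖ ≤ 1 in B(H^m), and all a_1, …, a_m, b_1, …, b_m ∈ 𝒜, one has |Σ_{i=1}^∞ ⟨(Σ_{p,q=1}^m π(a_p) T_{pq} π(b_q)) ξ_i, ξ_i⟩| ≤ ω(Σ_{p=1}^m a_p a_p*)^{1/2} · ω(Σ_{q=1}^m b_q* b_q)^{1/2}. -/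
open Matrix
open scoped InnerProductSpace

noncomputable section

/-- The bounded operator on the Hilbert space direct sum `H^m = PiLp 2 (fun _ : Fin m => H)`
induced by an `m × m` matrix of bounded operators on `H`. -/
def matOp {H : Type*} [NormedAddCommGroup H] [InnerProductSpace ℂ H]
    {m : ℕ} (T : Matrix (Fin m) (Fin m) (H →L[ℂ] H)) :
    (PiLp 2 fun _ : Fin m => H) →L[ℂ] (PiLp 2 fun _ : Fin m => H) :=
  ((PiLp.continuousLinearEquiv 2 ℂ fun _ : Fin m => H).symm.toContinuousLinearMap).comp
    ((ContinuousLinearMap.pi fun i =>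
        ∑ j, (T i j).comp (ContinuousLinearMap.proj j)).comp
      (PiLp.continuousLinearEquiv 2 ℂ fun _ : Fin m => H).toContinuousLinearMap)

lemma matOp_apply {H : Type*} [NormedAddCommGroup H] [InnerProductSpace ℂ H]
    {m : ℕ} (T : Matrix (Fin m) (Fin m) (H →L[ℂ] H))
    (x : PiLp 2 fun _ : Fin m => H) (p : Fin m) :
    matOp T x p = ∑ q, T p q (x q) := by
  simp [matOp, ContinuousLinearMap.sum_apply]

lemma tsum_mul_le_sqrt_mul_sqrt (f g : ℕ → ℝ) (hf0 : ∀ i, 0 ≤ f i) (hg0 : ∀ i, 0 ≤ g i)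
    (hf : Summable fun i => f i ^ 2) (hg : Summable fun i => g i ^ 2) :
    ∑' i, f i * g i ≤ Real.sqrt (∑' i, f i ^ 2) * Real.sqrt (∑' i, g i ^ 2) := by
  have hmul : Summable fun i => f i * g i := by
    apply Summable.of_nonneg_of_le (fun i => mul_nonneg (hf0 i) (hg0 i))
      (fun i => ?_) ((hf.add hg).div_const 2)
    nlinarith [sq_nonneg (f i - g i)]
  refine Summable.tsum_le_of_sum_le hmul fun s => ?_
  have h1 : (∑ i ∈ s, f i * g i) ^ 2 ≤ (∑ i ∈ s, f i ^ 2) * ∑ i ∈ s, g i ^ 2 :=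
    Finset.sum_mul_sq_le_sq_mul_sq s f g
  have h2 : ∑ i ∈ s, f i ^ 2 ≤ ∑' i, f i ^ 2 := Summable.sum_le_tsum s (fun i _ => sq_nonneg _) hf
  have h3 : ∑ i ∈ s, g i ^ 2 ≤ ∑' i, g i ^ 2 := Summable.sum_le_tsum s (fun i _ => sq_nonneg _) hg
  have h0 : 0 ≤ ∑ i ∈ s, f i * g i := Finset.sum_nonneg fun i _ => mul_nonneg (hf0 i) (hg0 i)
  calc ∑ i ∈ s, f i * g i
      ≤ Real.sqrt ((∑ i ∈ s, f i ^ 2) * ∑ i ∈ s, g i ^ 2) := by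
        rw [← Real.sqrt_sq h0]; exact Real.sqrt_le_sqrt h1
    _ ≤ _ := by
        rw [Real.sqrt_mul (Finset.sum_nonneg fun i _ => sq_nonneg _)]
        gcongr

/-- The key inequality in the proof of Lemma 4.5: for a unital *-representation `π` of `𝒜`
on `H`, a sequence `(ξ_i)` with `Σ ‖ξ_i‖² = 1`, and `ω(c) = Σ_i ⟨π(c)ξ_i, ξ_i⟩`, one has
`|Σ_i ⟨(Σ_{p,q} π(a_p) T_{pq} π(b_q))ξ_i, ξ_i⟩| ≤ ω(Σ_p a_p a_p*)^{1/2} ω(Σ_q b_q* b_q)^{1/2}`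
whenever `‖T‖ ≤ 1` in `B(H^m)`. -/
theorem abs_sum_le_sqrt_mul_sqrt
    {A : Type*} [CStarAlgebra A]
    {H : Type*} [NormedAddCommGroup H] [InnerProductSpace ℂ H] [CompleteSpace H]
    (π : A →⋆ₐ[ℂ] (H →L[ℂ] H))
    (ξ : ℕ → H) (hsum : Summable fun i => ‖ξ i‖ ^ 2) (hnorm : (∑' i, ‖ξ i‖ ^ 2) = 1)
    (ω : A → ℂ) (hω : ∀ c : A, ω c = ∑' i, ⟪(π c) (ξ i), ξ i⟫_ℂ)
    (m : ℕ) (T : Matrix (Fin m) (Fin m) (H →L[ℂ] H)) (hT : ‖matOp T‖ ≤ 1)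
    (a b : Fin m → A) :
    ‖∑' i, ⟪(∑ p, ∑ q, π (a p) * T p q * π (b q)) (ξ i), ξ i⟫_ℂ‖ ≤
      Real.sqrt (ω (∑ p, a p * star (a p))).re *
        Real.sqrt (ω (∑ q, star (b q) * b q)).re := by
  classical
  set u : ℕ → PiLp 2 (fun _ : Fin m => H) := fun i => WithLp.toLp 2 (fun p => π (star (a p)) (ξ i)) with hu
  set v : ℕ → PiLp 2 (fun _ : Fin m => H) := fun i => WithLp.toLp 2 (fun q => π (b q) (ξ i)) with hv
  -- summability of ‖A ξ i‖²
  have hA : ∀ (A₀ : H →L[ℂ] H), Summable fun i => ‖A₀ (ξ i)‖ ^ 2 := by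
    intro A₀
    apply Summable.of_nonneg_of_le (fun i => sq_nonneg _) (fun i => ?_) (hsum.mul_left (‖A₀‖ ^ 2))
    calc ‖A₀ (ξ i)‖ ^ 2 ≤ (‖A₀‖ * ‖ξ i‖) ^ 2 := by
          gcongr; exact A₀.le_opNorm _
      _ = ‖A₀‖ ^ 2 * ‖ξ i‖ ^ 2 := by ring
  have hunorm : ∀ i, ‖u i‖ ^ 2 = ∑ p, ‖π (star (a p)) (ξ i)‖ ^ 2 := fun i =>
    PiLp.norm_sq_eq_of_L2 _ _
  have hvnorm : ∀ i, ‖v i‖ ^ 2 = ∑ q, ‖π (b q) (ξ i)‖ ^ 2 := fun i =>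
    PiLp.norm_sq_eq_of_L2 _ _
  have hfu : Summable fun i => ‖u i‖ ^ 2 := by
    simp only [hunorm]; exact summable_sum fun p _ => hA _
  have hfv : Summable fun i => ‖v i‖ ^ 2 := by
    simp only [hvnorm]; exact summable_sum fun q _ => hA _
  -- ω values
  have hstar : ∀ c : A, π (star c) = ContinuousLinearMap.adjoint (π c) := fun c => by
    rw [map_star, ContinuousLinearMap.star_eq_adjoint]
  have hωa : (ω (∑ p, a p * star (a p))).re = ∑' i, ‖u i‖ ^ 2 := by
    have h1 : ∀ i, ⟪π (∑ p, a p * star (a p)) (ξ i), ξ i⟫_ℂ = ((‖u i‖ ^ 2 : ℝ) : ℂ) := by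
      intro i
      rw [map_sum, ContinuousLinearMap.sum_apply, sum_inner, hunorm]
      push_cast
      refine Finset.sum_congr rfl fun p _ => ?_
      have : a p * star (a p) = star (star (a p)) * star (a p) := by rw [star_star]
      rw [this, _root_.map_mul, ContinuousLinearMap.mul_apply, hstar,
        ContinuousLinearMap.adjoint_inner_left, inner_self_eq_norm_sq_to_K]
      norm_cast
    rw [hω, tsum_congr h1, ← Complex.ofReal_tsum, Complex.ofReal_re]
  have hωb : (ω (∑ q, star (b q) * b q)).re = ∑' i, ‖v i‖ ^ 2 := by
    have h1 : ∀ i, ⟪π (∑ q, star (b q) * b q) (ξ i), ξ i⟫_ℂ = ((‖v i‖ ^ 2 : ℝ) : ℂ) := by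
      intro i
      rw [map_sum, ContinuousLinearMap.sum_apply, sum_inner, hvnorm]
      push_cast
      refine Finset.sum_congr rfl fun q _ => ?_
      rw [_root_.map_mul, ContinuousLinearMap.mul_apply, hstar,
        ContinuousLinearMap.adjoint_inner_left, inner_self_eq_norm_sq_to_K]
      norm_cast
    rw [hω, tsum_congr h1, ← Complex.ofReal_tsum, Complex.ofReal_re]
  -- rewrite each term as inner product on H^m
  have hterm : ∀ i, ⟪(∑ p, ∑ q, π (a p) * T p q * π (b q)) (ξ i), ξ i⟫_ℂ
      = ⟪matOp T (v i), u i⟫_ℂ := by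
    intro i
    rw [PiLp.inner_apply]
    simp only [ContinuousLinearMap.sum_apply, sum_inner, matOp_apply]
    refine Finset.sum_congr rfl fun p _ => ?_
    refine Finset.sum_congr rfl fun q _ => ?_
    rw [ContinuousLinearMap.mul_apply, ContinuousLinearMap.mul_apply]
    conv_lhs => rw [show π (a p) = ContinuousLinearMap.adjoint (π (star (a p))) by
      rw [hstar, ContinuousLinearMap.adjoint_adjoint]]
    rw [ContinuousLinearMap.adjoint_inner_left]
  -- pointwise bound
  have hbound : ∀ i, ‖⟪(∑ p, ∑ q, π (a p) * T p q * π (b q)) (ξ i), ξ i⟫_ℂ‖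
      ≤ ‖v i‖ * ‖u i‖ := by
    intro i
    rw [hterm i]
    calc ‖⟪matOp T (v i), u i⟫_ℂ‖ ≤ ‖matOp T (v i)‖ * ‖u i‖ := norm_inner_le_norm _ _
      _ ≤ (‖matOp T‖ * ‖v i‖) * ‖u i‖ := by gcongr; exact (matOp T).le_opNorm _
      _ ≤ (1 * ‖v i‖) * ‖u i‖ := by gcongr
      _ = ‖v i‖ * ‖u i‖ := by ring
  have hmulsum : Summable fun i => ‖v i‖ * ‖u i‖ := by
    apply Summable.of_nonneg_of_le (fun i => mul_nonneg (norm_nonneg _) (norm_nonneg _))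
      (fun i => ?_) ((hfv.add hfu).div_const 2)
    nlinarith [sq_nonneg (‖v i‖ - ‖u i‖)]
  have hnormsum : Summable fun i => ‖⟪(∑ p, ∑ q, π (a p) * T p q * π (b q)) (ξ i), ξ i⟫_ℂ‖ :=
    Summable.of_nonneg_of_le (fun i => norm_nonneg _) hbound hmulsum
  calc ‖∑' i, ⟪(∑ p, ∑ q, π (a p) * T p q * π (b q)) (ξ i), ξ i⟫_ℂ‖
      ≤ ∑' i, ‖⟪(∑ p, ∑ q, π (a p) * T p q * π (b q)) (ξ i), ξ i⟫_ℂ‖ :=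
        norm_tsum_le_tsum_norm hnormsum
    _ ≤ ∑' i, ‖v i‖ * ‖u i‖ := Summable.tsum_le_tsum hbound hnormsum hmulsum
    _ ≤ Real.sqrt (∑' i, ‖v i‖ ^ 2) * Real.sqrt (∑' i, ‖u i‖ ^ 2) :=
        tsum_mul_le_sqrt_mul_sqrt _ _ (fun i => norm_nonneg _) (fun i => norm_nonneg _) hfv hfu
    _ = Real.sqrt (ω (∑ p, a p * star (a p))).re * Real.sqrt (ω (∑ q, star (b q) * b q)).re := by
        rw [hωa, hωb, mul_comm]
end
end
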